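/- Let ρ > 0, σ > 0 and γ ∈ ℝ. Set L_n = 2⌊√(2n)·σ⌋ + ⌊(8n/9)^{1/4}·γ⌋ and m_n = ⌊nρ⌋ (both are positive for all sufficiently large n). Then, as n → ∞, (1 + L_n/(3 m_n))^{3 m_n} / exp(L_n − 4σ²/(3ρ)) converges to 1. -/

import Mathlib

open Filter

lemma floor_div_tendsto (x c : ℕ → ℝ) (l : ℝ) (hc : Tendsto c atTop atTop)
    (hx : Tendsto (fun n => x n / c n) atTop (nhds l)) :
    Tendsto (fun n => ((⌊x n⌋ : ℝ)) / c n) atTop (nhds l) := by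
  have hcpos : ∀ᶠ n in atTop, 0 < c n := hc.eventually_gt_atTop 0
  have h0 : Tendsto (fun n => (x n - (⌊x n⌋ : ℝ)) / c n) atTop (nhds 0) := by
    apply squeeze_zero'
    · filter_upwards [hcpos] with n hn
      exact div_nonneg (by linarith [Int.floor_le (x n)]) hn.le
    · filter_upwards [hcpos] with n hn
      rw [div_le_iff₀ hn]
      have := Int.lt_floor_add_one (x n)
      calc x n - ⌊x n⌋ ≤ 1 := by linarith
        _ ≤ (c n)⁻¹ * c n := by rw [inv_mul_cancel₀ hn.ne']
    · exact hc.inv_tendsto_atTop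
  have := hx.sub h0
  simp only [sub_zero] at this
  apply this.congr
  intro n
  rw [div_sub_div_same]; ring_nf

/-- `L_n = 2⌊√(2n)·σ⌋ + ⌊(8n/9)^{1/4}·γ⌋`. -/
noncomputable def Lseq (σ γ : ℝ) (n : ℕ) : ℤ :=
  2 * ⌊Real.sqrt (2 * (n : ℝ)) * σ⌋ + ⌊(8 * (n : ℝ) / 9) ^ ((1 : ℝ) / 4) * γ⌋

/-- `m_n = ⌊nρ⌋`. -/
noncomputable def mseq (ρ : ℝ) (n : ℕ) : ℤ := ⌊(n : ℝ) * ρ⌋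

lemma hc_nat : Tendsto (fun n : ℕ => (n : ℝ)) atTop atTop := tendsto_natCast_atTop_atTop

lemma hc_sqrt : Tendsto (fun n : ℕ => Real.sqrt n) atTop atTop := by
  have h : Tendsto (fun x : ℝ => x ^ ((1:ℝ)/2)) atTop atTop := tendsto_rpow_atTop (by norm_num)
  have := h.comp hc_nat
  apply this.congr
  intro n
  simp [Real.rpow_natCast, Real.sqrt_eq_rpow, Function.comp]

lemma hB (ρ : ℝ) (hρ : 0 < ρ) :
    Tendsto (fun n : ℕ => ((mseq ρ n : ℝ)) / n) atTop (nhds ρ) := by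
  apply floor_div_tendsto _ _ _ hc_nat
  apply Tendsto.congr' _ tendsto_const_nhds
  filter_upwards [eventually_gt_atTop 0] with n hn
  have : (n : ℝ) ≠ 0 := by positivity
  field_simp

lemma hA (σ γ : ℝ) :
    Tendsto (fun n : ℕ => ((Lseq σ γ n : ℝ)) / Real.sqrt n) atTop
      (nhds (2 * Real.sqrt 2 * σ)) := by
  have h1 : Tendsto (fun n : ℕ => ((⌊Real.sqrt (2 * (n:ℝ)) * σ⌋ : ℝ)) / Real.sqrt n) atTop
      (nhds (Real.sqrt 2 * σ)) := by
    apply floor_div_tendsto _ _ _ hc_sqrt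
    apply Tendsto.congr' _ tendsto_const_nhds
    filter_upwards [eventually_gt_atTop 0] with n hn
    have hs : Real.sqrt (n:ℝ) ≠ 0 := by
      simp [Real.sqrt_ne_zero']; positivity
    rw [Real.sqrt_mul (by norm_num : (0:ℝ) ≤ 2)]
    field_simp
  have h2 : Tendsto (fun n : ℕ => ((⌊(8 * (n:ℝ) / 9) ^ ((1:ℝ)/4) * γ⌋ : ℝ)) / Real.sqrt n) atTop
      (nhds 0) := by
    apply floor_div_tendsto _ _ _ hc_sqrt
    have key : Tendsto (fun n : ℕ => (8/9 : ℝ) ^ ((1:ℝ)/4) * γ * (n:ℝ) ^ (-(1:ℝ)/4)) atTop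
        (nhds 0) := by
      have h := (tendsto_rpow_neg_atTop (y := (1:ℝ)/4) (by norm_num)).comp hc_nat
      have := h.const_mul ((8/9 : ℝ) ^ ((1:ℝ)/4) * γ)
      simpa [Function.comp, neg_div] using this
    apply Tendsto.congr' _ key
    filter_upwards [eventually_gt_atTop 0] with n hn
    have hn0 : (0:ℝ) < (n:ℝ) := by positivity
    rw [Real.sqrt_eq_rpow]
    rw [show (8 * (n:ℝ) / 9) = (8/9) * n by ring,
      Real.mul_rpow (by norm_num) hn0.le]
    rw [eq_div_iff (by positivity : ((n:ℝ) ^ ((1:ℝ)/2)) ≠ 0)]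
    have : (n:ℝ) ^ (-(1:ℝ)/4) * (n:ℝ) ^ ((1:ℝ)/2) = (n:ℝ) ^ ((1:ℝ)/4) := by
      rw [← Real.rpow_add hn0]; norm_num
    calc (8/9 : ℝ) ^ ((1:ℝ)/4) * γ * (n:ℝ) ^ (-(1:ℝ)/4) * (n:ℝ) ^ ((1:ℝ)/2)
        = (8/9 : ℝ) ^ ((1:ℝ)/4) * γ * ((n:ℝ) ^ (-(1:ℝ)/4) * (n:ℝ) ^ ((1:ℝ)/2)) := by ring
      _ = (8/9 : ℝ) ^ ((1:ℝ)/4) * (n:ℝ) ^ ((1:ℝ)/4) * γ := by rw [this]; ring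
  have := (h1.const_mul 2).add h2
  rw [add_zero, ← mul_assoc] at this
  apply this.congr
  intro n
  simp only [Lseq]
  push_cast
  ring

lemma log_taylor_bound (u : ℝ) (hu : |u| < 1/2) :
    |Real.log (1 + u) - u + u ^ 2 / 2| ≤ 2 * |u| ^ 3 := by
  have hx : |(-u)| < 1 := by rw [abs_neg]; linarith [abs_nonneg u]
  have h := Real.abs_log_sub_add_sum_range_le hx 2
  simp only [Finset.sum_range_succ, Finset.sum_range_zero] at h
  rw [sub_neg_eq_add] at h
  norm_num at h
  have harg : -u + u ^ 2 / 2 + Real.log (1 + u) = Real.log (1 + u) - u + u ^ 2 / 2 := by ring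
  rw [harg] at h
  have h1 : (1:ℝ)/2 ≤ 1 - |u| := by linarith [abs_lt.mp hu]
  have h2 : |u| ^ 3 / (1 - |u|) ≤ |u| ^ 3 / (1/2) :=
    div_le_div_of_nonneg_left (by positivity) (by norm_num) h1
  calc |Real.log (1 + u) - u + u ^ 2 / 2| ≤ |u| ^ 3 / (1 - |u|) := h
    _ ≤ |u| ^ 3 / (1/2) := h2
    _ = 2 * |u| ^ 3 := by ring

/-- As `n → ∞`, `(1 + L_n/(3 m_n))^{3 m_n} / exp(L_n − 4σ²/(3ρ))` converges to `1`. -/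
theorem tendsto_pow_three (ρ σ γ : ℝ) (hρ : 0 < ρ) (hσ : 0 < σ) :
    Tendsto
      (fun n : ℕ =>
        (1 + (Lseq σ γ n : ℝ) / (3 * (mseq ρ n : ℝ))) ^ (3 * mseq ρ n) /
          Real.exp ((Lseq σ γ n : ℝ) - 4 * σ ^ 2 / (3 * ρ)))
      atTop (nhds 1) := by
  set a : ℕ → ℝ := fun n => ((Lseq σ γ n : ℝ)) with ha_def
  set m : ℕ → ℝ := fun n => ((mseq ρ n : ℝ)) with hm_def
  set t : ℕ → ℝ := fun n => a n / (3 * m n) with ht_def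
  set c : ℝ := 4 * σ ^ 2 / (3 * ρ) with hc_def
  have hAa := hA σ γ
  have hBb := hB ρ hρ
  have hρ3 : (3 : ℝ) * ρ ≠ 0 := by positivity
  -- m eventually ≥ 1
  have hm1 : ∀ᶠ n in atTop, (1 : ℝ) ≤ m n := by
    have h := (hc_nat.atTop_mul_const hρ).eventually_ge_atTop (1 : ℝ)
    filter_upwards [h] with n hn
    have h2 : (1 : ℤ) ≤ mseq ρ n := Int.le_floor.mpr (by exact_mod_cast hn)
    show (1:ℝ) ≤ ((mseq ρ n : ℤ) : ℝ)
    exact_mod_cast h2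
  have hmpos : ∀ᶠ n in atTop, 0 < m n := by
    filter_upwards [hm1] with n hn; linarith
  -- t → 0
  have hT : Tendsto t atTop (nhds 0) := by
    have lim : Tendsto (fun n : ℕ =>
        ((a n / Real.sqrt n) / (3 * (m n / n))) * (Real.sqrt n)⁻¹) atTop (nhds 0) := by
      have h1 := hAa.div (hBb.const_mul 3) (by positivity)
      have := h1.mul hc_sqrt.inv_tendsto_atTop
      simpa using this
    apply Tendsto.congr' _ lim
    filter_upwards [eventually_gt_atTop 0, hmpos] with n hn hm
    have hn0 : (0:ℝ) < (n:ℝ) := by exact_mod_cast hn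
    rw [ht_def]
    simp only
    set s := Real.sqrt (n:ℝ) with hsdef
    have hs : s * s = (n:ℝ) := Real.mul_self_sqrt hn0.le
    have hsne : s ≠ 0 := by rw [hsdef]; positivity
    rw [← hs]
    field_simp
  -- a²/(6m) → c
  have hS : Tendsto (fun n => a n ^ 2 / (6 * m n)) atTop (nhds c) := by
    have lim : Tendsto (fun n : ℕ =>
        (a n / Real.sqrt n) ^ 2 / (6 * (m n / n))) atTop (nhds c) := by
      have h1 := (hAa.pow 2).div (hBb.const_mul 6) (by positivity)
      convert h1 using 2
      · rfl
      rw [hc_def]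
      rw [mul_pow, mul_pow, Real.sq_sqrt (by norm_num : (0:ℝ) ≤ 2)]
      ring
    apply Tendsto.congr' _ lim
    filter_upwards [eventually_gt_atTop 0, hmpos] with n hn hm
    have hn0 : (0:ℝ) < (n:ℝ) := by exact_mod_cast hn
    set s := Real.sqrt (n:ℝ) with hsdef
    have hs : s * s = (n:ℝ) := Real.mul_self_sqrt hn0.le
    have hsne : s ≠ 0 := by rw [hsdef]; positivity
    rw [← hs]
    field_simp
  -- |a|³/(9m²) → 0
  have hAabs : Tendsto (fun n : ℕ => |a n| / Real.sqrt n) atTop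
      (nhds |2 * Real.sqrt 2 * σ|) := by
    have := hAa.abs
    apply this.congr
    intro n
    rw [abs_div, abs_of_nonneg (Real.sqrt_nonneg _)]
  have hR : Tendsto (fun n => |a n| ^ 3 / (9 * m n ^ 2)) atTop (nhds 0) := by
    have lim : Tendsto (fun n : ℕ =>
        ((|a n| / Real.sqrt n) ^ 3 / (9 * (m n / n) ^ 2)) * (Real.sqrt n)⁻¹) atTop
        (nhds 0) := by
      have h1 := (hAabs.pow 3).div ((hBb.pow 2).const_mul 9) (by positivity)
      have := h1.mul hc_sqrt.inv_tendsto_atTop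
      simpa using this
    apply Tendsto.congr' _ lim
    filter_upwards [eventually_gt_atTop 0, hmpos] with n hn hm
    have hn0 : (0:ℝ) < (n:ℝ) := by exact_mod_cast hn
    set s := Real.sqrt (n:ℝ) with hsdef
    have hs : s * s = (n:ℝ) := Real.mul_self_sqrt hn0.le
    have hsne : s ≠ 0 := by rw [hsdef]; positivity
    rw [← hs]
    field_simp
  -- t eventually small
  have hsmall : ∀ᶠ n in atTop, |t n| < 1/2 := by
    have hmem : Set.Ioo (-(1/2) : ℝ) (1/2) ∈ nhds (0:ℝ) :=
      Ioo_mem_nhds (by norm_num) (by norm_num)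
    filter_upwards [hT hmem] with n hn
    rw [abs_lt]; exact ⟨hn.1, hn.2⟩
  -- exponent
  set E : ℕ → ℝ := fun n => 3 * m n * Real.log (1 + t n) - (a n - c) with hE_def
  have hEeq : ∀ᶠ n in atTop,
      (1 + a n / (3 * m n)) ^ (3 * mseq ρ n) / Real.exp (a n - c) = Real.exp (E n) := by
    filter_upwards [hmpos, hsmall] with n hm hsm
    have ht1 : 0 < 1 + t n := by
      have := abs_lt.mp hsm; linarith
    have hz : (1 + t n) ^ (3 * mseq ρ n) =
        Real.exp ((3 * m n) * Real.log (1 + t n)) := by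
      have hcast : ((3 * mseq ρ n : ℤ) : ℝ) = 3 * m n := by push_cast; ring
      rw [← hcast, ← Real.log_zpow, Real.exp_log (zpow_pos ht1 _)]
    rw [show a n / (3 * m n) = t n from rfl, hz, ← Real.exp_sub]
  -- D → 0
  set D : ℕ → ℝ := fun n => E n - (c - a n ^ 2 / (6 * m n)) with hD_def
  have hD0 : Tendsto D atTop (nhds 0) := by
    apply squeeze_zero_norm'
    · filter_upwards [hmpos, hsmall] with n hm hsm
      have hmne : m n ≠ 0 := hm.ne'
      have ha_eq : a n = 3 * m n * t n := by
        rw [ht_def]; field_simp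
      have hDval : D n = 3 * m n * (Real.log (1 + t n) - t n + t n ^ 2 / 2) := by
        rw [hD_def, hE_def]
        simp only
        rw [ha_eq]
        field_simp
        ring
      have hlog := log_taylor_bound (t n) hsm
      have habs_t : |t n| = |a n| / (3 * m n) := by
        rw [ht_def]
        rw [abs_div, abs_of_pos (by linarith : (0:ℝ) < 3 * m n)]
      calc ‖D n‖ = 3 * m n * |Real.log (1 + t n) - t n + t n ^ 2 / 2| := by
            rw [hDval, Real.norm_eq_abs, abs_mul, abs_of_pos (by linarith : (0:ℝ) < 3 * m n)]
        _ ≤ 3 * m n * (2 * |t n| ^ 3) := by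
            apply mul_le_mul_of_nonneg_left hlog (by linarith)
        _ = 2 * (|a n| ^ 3 / (9 * m n ^ 2)) := by
            rw [habs_t]; field_simp; ring
    · simpa using hR.const_mul 2
  -- E → 0
  have hE0 : Tendsto E atTop (nhds 0) := by
    have := ((tendsto_const_nhds (x := c)).sub hS).add hD0
    rw [sub_self, add_zero] at this
    apply this.congr
    intro n
    rw [hD_def]; ring
  -- conclude
  have hexp : Tendsto (fun n => Real.exp (E n)) atTop (nhds 1) := by
    have := (Real.continuous_exp.tendsto 0).comp hE0
    simpa [Function.comp_def] using this
  exact hexp.congr' (by filter_upwards [hEeq] with n hn; exact hn.symm)
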